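/- Let G be a marked graph and v an unlooped, unmarked vertex. Writing S = d^φ · Σ_{T⊆V(G), v∉T} A^{n−|T|} B^{|T|} d^{ν(𝒜(G)_T)}, the following hold: [G with v unlooped-unmarked] = S + B[G_cru^v − v]; [G with v marked u, unlooped] = S + B[G − v]; [G with v marked c, unlooped] = A[G − v] + B[G_cru^v − v]; and [G with v marked cr, unlooped] = B[G − v] + A[G_cru^v − v]. (Here only the loop-mark combination of v varies; the underlying edges, loops elsewhere, and marks of other vertices are fixed.) -/

import Mathlib

/-- The six vertex marks of a multiply marked graph. -/
inductive Mark : Type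
  | un | r | c | cr | u | ur
deriving DecidableEq

/-- A (multiply marked) graph: symmetric irreflexive adjacency, loops,
marks, and a number of free loops. -/
structure MGraph (V : Type) [DecidableEq V] : Type where
  adj : V → V → Bool
  adj_symm : ∀ x y, adj x y = adj y x
  adj_irrefl : ∀ x, adj x x = false
  loop : V → Bool
  mark : V → Mark
  freeLoops : ℕ

namespace MGraph

variable {V : Type} [DecidableEq V]

/-- The mark change at `v` itself: unmarked↔u, r↔ur, c↔cr. -/
def flipV : Mark → Mark
  | .un => .u | .u => .un | .r => .ur | .ur => .r | .c => .cr | .cr => .c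

/-- The mark change at neighbors of `v`: unmarked↔r, c↔ur, u↔cr. -/
def flipN : Mark → Mark
  | .un => .r | .r => .un | .c => .ur | .ur => .c | .u => .cr | .cr => .u

/-- The marked local complement `G_cru^v`. -/
def mlc (G : MGraph V) (v : V) : MGraph V where
  adj x y := if x ≠ y ∧ G.adj v x = true ∧ G.adj v y = true then !(G.adj x y) else G.adj x y
  adj_symm := by
    intro x y
    try dsimp only
    by_cases h : x ≠ y ∧ G.adj v x = true ∧ G.adj v y = true
    · rw [if_pos h, if_pos ⟨h.1.symm, h.2.2, h.2.1⟩, G.adj_symm]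
    · rw [if_neg h, if_neg (fun h' => h ⟨h'.1.symm, h'.2.2, h'.2.1⟩), G.adj_symm]
  adj_irrefl := by
    intro x
    try dsimp only
    rw [if_neg (fun h => h.1 rfl), G.adj_irrefl]
  loop := G.loop
  mark x := if x = v then flipV (G.mark x)
            else if G.adj v x = true then flipN (G.mark x) else G.mark x
  freeLoops := G.freeLoops

end MGraph

/-- Whether a mark contains the letter `r`. -/
def Mark.hasR : Mark → Bool
  | .r => true | .cr => true | .ur => true | _ => false

/-- Whether a mark is `c` or `cr`. -/
def Mark.isC : Mark → Bool
  | .c => true | .cr => true | _ => false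

/-- Whether a mark is `u` or `ur`. -/
def Mark.isU : Mark → Bool
  | .u => true | .ur => true | _ => false

/-- GF(2)-nullity of a square matrix. -/
noncomputable def nullity {n : Type} [Fintype n] (M : Matrix n n (ZMod 2)) : ℕ :=
  Fintype.card n - M.rank

namespace MGraph

variable {V : Type} [DecidableEq V]

/-- The matrix `𝒜(G) + Δ_T` over GF(2): off-diagonal entries record adjacency,
and the diagonal entry at `x` is the loop contribution plus the `Δ_T` entry,
which is `1` iff (`x ∈ T` and the mark of `x` has no `r`) or (`x ∉ T` and it has an `r`). -/
def matT (G : MGraph V) (T : Finset V) : Matrix V V (ZMod 2) :=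
  Matrix.of fun x y =>
    if x = y then
      (if G.loop x = true then 1 else 0) +
        (if ((x ∈ T) ↔ (G.mark x).hasR = false) then 1 else 0)
    else if G.adj x y = true then 1 else 0

/-- The vertices whose rows and columns are kept in `𝒜(G)_T`: delete `x` iff
`x` is marked `c`/`cr` with diagonal entry `0`, or marked `u`/`ur` with diagonal entry `1`. -/
def keep (G : MGraph V) (T : Finset V) (x : V) : Bool :=
  !(((G.mark x).isC && decide (G.matT T x x = 0)) ||
    ((G.mark x).isU && decide (G.matT T x x = 1)))

/-- The matrix `𝒜(G)_T`, the submatrix of `𝒜(G) + Δ_T` on the kept vertices. -/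
def subMat (G : MGraph V) (T : Finset V) :
    Matrix {x : V // G.keep T x = true} {x : V // G.keep T x = true} (ZMod 2) :=
  (G.matT T).submatrix Subtype.val Subtype.val

/-- The marked-graph bracket polynomial, evaluated at elements `A`, `B`, `d`
of a commutative ring. -/
noncomputable def bracket (G : MGraph V) [Fintype V] {R : Type*} [CommRing R]
    (A B d : R) : R :=
  d ^ G.freeLoops *
    ∑ T : Finset V, A ^ (Fintype.card V - T.card) * B ^ T.card * d ^ nullity (G.subMat T)

/-- The weighted marked-graph bracket polynomial with vertex weights `α`, `β`. -/
noncomputable def wbracket (G : MGraph V) [Fintype V] {R : Type*} [CommRing R]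
    (d : R) (α β : V → R) : R :=
  d ^ G.freeLoops *
    ∑ T : Finset V, (∏ x ∈ Tᶜ, α x) * (∏ x ∈ T, β x) * d ^ nullity (G.subMat T)

/-- Deletion of the vertex `v`. -/
def delete (G : MGraph V) (v : V) : MGraph {x : V // x ≠ v} where
  adj x y := G.adj x.val y.val
  adj_symm := fun x y => G.adj_symm x.val y.val
  adj_irrefl := fun x => G.adj_irrefl x.val
  loop x := G.loop x.val
  mark x := G.mark x.val
  freeLoops := G.freeLoops

/-- Change the mark of the vertex `v` to `m`. -/
def setMark (G : MGraph V) (v : V) (m : Mark) : MGraph V :=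
  { G with mark := fun x => if x = v then m else G.mark x }

/-- The one-vertex graph with given loop status and mark (and no free loops). -/
def single (l : Bool) (m : Mark) : MGraph Unit where
  adj _ _ := false
  adj_symm := fun _ _ => rfl
  adj_irrefl := fun _ => rfl
  loop _ := l
  mark _ := m
  freeLoops := 0

end MGraph


/-! ### Auxiliary lemmas for the proof -/

open Module in
lemma MB_nullity_eq_finrank_ker {n : Type} [Fintype n] (M : Matrix n n (ZMod 2)) :
    nullity M = finrank (ZMod 2) (LinearMap.ker M.mulVecLin) := by
  have h := LinearMap.finrank_range_add_finrank_ker M.mulVecLin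
  rw [finrank_fintype_fun_eq_card] at h
  unfold nullity Matrix.rank
  omega

lemma MB_nullity_congr {m n : Type} [Fintype m] [Fintype n] (e : m ≃ n)
    (M : Matrix m m (ZMod 2)) (N : Matrix n n (ZMod 2))
    (h : ∀ x y, M x y = N (e x) (e y)) : nullity M = nullity N := by
  have hM : M = N.submatrix e e := by ext x y; exact h x y
  subst hM
  unfold nullity
  rw [Matrix.rank_submatrix, Fintype.card_congr e]

lemma MB_z2 (a b : ZMod 2) : a + b = 0 ↔ a = b := by revert a b; decide

lemma MB_sum_split {n : Type} [Fintype n] [DecidableEq n] (v : n) (f : n → ZMod 2) :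
    ∑ y, f y = f v + ∑ x : {x // x ≠ v}, f x := by
  rw [Fintype.sum_eq_add_sum_compl v f]
  congr 1
  exact Finset.sum_subtype (p := fun x => x ≠ v) {v}ᶜ (by simp) f

/-- Pivoting on a diagonal `1` entry preserves nullity over GF(2). -/
lemma MB_pivot_nullity {n : Type} [Fintype n] [DecidableEq n] (M : Matrix n n (ZMod 2))
    (v : n) (hv : M v v = 1) :
    nullity M = nullity (Matrix.of fun x y : {x : n // x ≠ v} =>
      M x.1 y.1 + M x.1 v * M v y.1) := by
  rw [MB_nullity_eq_finrank_ker, MB_nullity_eq_finrank_ker]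
  set N : Matrix {x : n // x ≠ v} {x : n // x ≠ v} (ZMod 2) :=
    Matrix.of fun x y => M x.1 y.1 + M x.1 v * M v y.1 with hN
  let r : (n → ZMod 2) →ₗ[ZMod 2] ({x : n // x ≠ v} → ZMod 2) :=
    LinearMap.funLeft (ZMod 2) (ZMod 2) Subtype.val
  have mem_ker_M : ∀ u : n → ZMod 2, u ∈ LinearMap.ker M.mulVecLin ↔
      ∀ z, ∑ y, M z y * u y = 0 := by
    intro u
    rw [LinearMap.mem_ker]
    constructor
    · intro h z
      have := congrFun h z
      simpa [Matrix.mulVecLin_apply, Matrix.mulVec, dotProduct] using this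
    · intro h
      funext z
      simpa [Matrix.mulVecLin_apply, Matrix.mulVec, dotProduct] using h z
  have mem_ker_N : ∀ w : {x : n // x ≠ v} → ZMod 2, w ∈ LinearMap.ker N.mulVecLin ↔
      ∀ z : {x : n // x ≠ v}, ∑ y : {x : n // x ≠ v}, N z y * w y = 0 := by
    intro w
    rw [LinearMap.mem_ker]
    constructor
    · intro h z
      have := congrFun h z
      simpa [Matrix.mulVecLin_apply, Matrix.mulVec, dotProduct] using this
    · intro h
      funext z
      simpa [Matrix.mulVecLin_apply, Matrix.mulVec, dotProduct] using h z
  have key : ∀ u ∈ LinearMap.ker M.mulVecLin, r u ∈ LinearMap.ker N.mulVecLin := by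
    intro u hu
    rw [mem_ker_M] at hu
    have hv' : ∑ x : {x : n // x ≠ v}, M v x.1 * u x.1 = u v := by
      have h := hu v
      rw [MB_sum_split v, hv, one_mul, add_comm, MB_z2] at h
      exact h
    rw [mem_ker_N]
    intro z
    have hz : ∑ x : {x : n // x ≠ v}, M z.1 x.1 * u x.1 = M z.1 v * u v := by
      have h := hu z.1
      rw [MB_sum_split v, add_comm, MB_z2] at h
      exact h
    have : ∀ y : {x : n // x ≠ v}, N z y * r u y
        = M z.1 y.1 * u y.1 + M z.1 v * (M v y.1 * u y.1) := by
      intro y; show (M z.1 y.1 + M z.1 v * M v y.1) * u y.1 = _; ring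
    rw [Finset.sum_congr rfl (fun y _ => this y), Finset.sum_add_distrib,
      ← Finset.mul_sum, hz, hv']
    rw [MB_z2]
  let f : LinearMap.ker M.mulVecLin →ₗ[ZMod 2] LinearMap.ker N.mulVecLin :=
    r.restrict key
  have hbij : Function.Bijective f := by
    constructor
    · intro u1 u2 h
      have h' : ∀ x : {x : n // x ≠ v}, u1.1 x.1 = u2.1 x.1 := by
        intro x
        exact congrFun (congrArg Subtype.val h) x
      have hval : ∀ (u : LinearMap.ker M.mulVecLin),
          u.1 v = ∑ x : {x : n // x ≠ v}, M v x.1 * u.1 x.1 := by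
        intro u
        have hu := (mem_ker_M u.1).mp u.2 v
        rw [MB_sum_split v, hv, one_mul, add_comm, MB_z2] at hu
        exact hu.symm
      apply Subtype.ext
      funext y
      by_cases hy : y = v
      · subst hy
        rw [hval u1, hval u2]
        exact Finset.sum_congr rfl (fun x _ => by rw [h' x])
      · exact h' ⟨y, hy⟩
    · rintro ⟨w, hw⟩
      rw [mem_ker_N] at hw
      set u : n → ZMod 2 := fun y =>
        if h : y = v then ∑ x : {x : n // x ≠ v}, M v x.1 * w x else w ⟨y, h⟩ with hu
      have hux : ∀ x : {x : n // x ≠ v}, u x.1 = w x := by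
        intro x; simp only [hu, dif_neg x.2]
      have huv : u v = ∑ x : {x : n // x ≠ v}, M v x.1 * w x := by
        simp only [hu, dif_pos rfl]
      have huker : u ∈ LinearMap.ker M.mulVecLin := by
        rw [mem_ker_M]
        intro z
        rw [MB_sum_split v]
        by_cases hz : z = v
        · subst hz
          rw [hv, one_mul, huv, MB_z2]
          exact Finset.sum_congr rfl (fun x _ => by rw [hux x])
        · have hNz := hw ⟨z, hz⟩
          have : ∀ y : {x : n // x ≠ v}, N ⟨z, hz⟩ y * w y
              = M z y.1 * w y + M z v * (M v y.1 * w y) := by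
            intro y; show (M z y.1 + M z v * M v y.1) * w y = _; ring
          rw [Finset.sum_congr rfl (fun y _ => this y), Finset.sum_add_distrib,
            ← Finset.mul_sum] at hNz
          have hsum : ∀ x : {x : n // x ≠ v}, M z x.1 * u x.1 = M z x.1 * w x := by
            intro x; rw [hux x]
          rw [Finset.sum_congr rfl (fun x _ => hsum x), huv]
          rw [MB_z2] at hNz ⊢
          exact hNz.symm
      refine ⟨⟨u, huker⟩, ?_⟩
      apply Subtype.ext
      funext x
      exact hux x
  exact (LinearEquiv.ofBijective f hbij).finrank_eq

section MBAux

variable {V : Type} [DecidableEq V]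

lemma MB_hasR_flipN (m : Mark) : (MGraph.flipN m).hasR = !m.hasR := by cases m <;> rfl

lemma MB_keep_flip (m : Mark) : ∀ a : ZMod 2,
    (!((m.isC && decide (a = 0)) || (m.isU && decide (a = 1)))) =
    (!(((MGraph.flipN m).isC && decide (a + 1 = 0)) ||
       ((MGraph.flipN m).isU && decide (a + 1 = 1)))) := by
  cases m <;> decide

lemma MB_ind_mul (c1 c2 : Bool) :
    (if c1 = true then (1 : ZMod 2) else 0) * (if c2 = true then 1 else 0)
      = if (c1 && c2) = true then 1 else 0 := by
  cases c1 <;> cases c2 <;> simp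

lemma MB_matT_ne (H : MGraph V) (T : Finset V) {x y : V} (h : x ≠ y) :
    H.matT T x y = if H.adj x y = true then 1 else 0 := by
  simp [MGraph.matT, h]

lemma MB_matT_diag (H : MGraph V) (T : Finset V) (x : V) :
    H.matT T x x = (if H.loop x = true then 1 else 0) +
      (if ((x ∈ T) ↔ (H.mark x).hasR = false) then 1 else 0) := by
  simp [MGraph.matT]

variable (v : V)

lemma MB_matT_delete (H : MGraph V) (T : Finset V) (T' : Finset {x : V // x ≠ v})
    (hmem : ∀ x : {x : V // x ≠ v}, x.1 ∈ T ↔ x ∈ T') (x y : {x : V // x ≠ v}) :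
    (H.delete v).matT T' x y = H.matT T x.1 y.1 := by
  by_cases hxy : x = y
  · subst hxy
    rw [MB_matT_diag, MB_matT_diag]
    have h1 : (x ∈ T') ↔ (x.1 ∈ T) := (hmem x).symm
    simp [MGraph.delete, h1]
    exact if_congr Iff.rfl rfl rfl
  · have hxy' : x.1 ≠ y.1 := fun h => hxy (Subtype.ext h)
    rw [MB_matT_ne _ _ hxy, MB_matT_ne _ _ hxy']
    rfl

lemma MB_keep_delete (H : MGraph V) (T : Finset V) (T' : Finset {x : V // x ≠ v})
    (hmem : ∀ x : {x : V // x ≠ v}, x.1 ∈ T ↔ x ∈ T') (x : {x : V // x ≠ v}) :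
    (H.delete v).keep T' x = H.keep T x.1 := by
  simp only [MGraph.keep, MB_matT_delete v H T T' hmem x x]
  rfl

lemma MB_matT_setMark_noR (G : MGraph V) (hm : G.mark v = Mark.un) (m : Mark)
    (hR : m.hasR = false) (T : Finset V) :
    (G.setMark v m).matT T = G.matT T := by
  ext x y
  by_cases hxy : x = y
  · subst hxy
    rw [MB_matT_diag, MB_matT_diag]
    by_cases hxv : x = v
    · subst hxv
      have h0 : Mark.un.hasR = false := rfl
      simp [MGraph.setMark, hm, hR, h0]
      exact if_congr Iff.rfl rfl rfl
    · simp [MGraph.setMark, hxv]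
      exact if_congr Iff.rfl rfl rfl
  · rw [MB_matT_ne _ _ hxy, MB_matT_ne _ _ hxy]
    rfl

lemma MB_matT_setMark_cr (G : MGraph V) (hm : G.mark v = Mark.un) (T : Finset V)
    (hv : v ∉ T) :
    (G.setMark v Mark.cr).matT T = G.matT (insert v T) := by
  ext x y
  by_cases hxy : x = y
  · subst hxy
    rw [MB_matT_diag, MB_matT_diag]
    by_cases hxv : x = v
    · subst hxv
      have h0 : Mark.un.hasR = false := rfl
      have h1 : Mark.cr.hasR = true := rfl
      simp [MGraph.setMark, hm, hv, h0, h1]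
      exact if_congr Iff.rfl rfl rfl
    · simp [MGraph.setMark, hxv, Finset.mem_insert]
      exact if_congr Iff.rfl rfl rfl
  · rw [MB_matT_ne _ _ hxy, MB_matT_ne _ _ hxy]
    rfl

lemma MB_diag_setMark_v (G : MGraph V) (hl : G.loop v = false) (m : Mark) (T : Finset V) :
    (G.setMark v m).matT T v v = if ((v ∈ T) ↔ m.hasR = false) then 1 else 0 := by
  rw [MB_matT_diag]
  simp [MGraph.setMark, hl]

lemma MB_diag_G_v (G : MGraph V) (hl : G.loop v = false) (hm : G.mark v = Mark.un)
    (T : Finset V) : G.matT T v v = if v ∈ T then 1 else 0 := by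
  rw [MB_matT_diag]
  have h0 : Mark.un.hasR = false := rfl
  simp [hl, hm, h0]

/-- Equivalence between kept sets when the vertex `v` is dropped. -/
def MB_delEquiv {p : V → Bool} {q : {x : V // x ≠ v} → Bool}
    (h1 : p v = false) (h2 : ∀ (x : V) (hx : x ≠ v), p x = q ⟨x, hx⟩) :
    {x : V // p x = true} ≃ {y : {x : V // x ≠ v} // q y = true} where
  toFun a := ⟨⟨a.1, fun h => by have := a.2; rw [h, h1] at this; exact Bool.noConfusion this⟩,
    by rw [← h2 a.1 _]; exact a.2⟩
  invFun b := ⟨b.1.1, by rw [h2 b.1.1 b.1.2]; exact b.2⟩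
  left_inv a := rfl
  right_inv b := by apply Subtype.ext; apply Subtype.ext; rfl

/-- Equivalence between the kept set minus the pivot and a kept set on `V − v`. -/
def MB_pivEquiv {p : V → Bool} (v₀ : {x : V // p x = true}) (hv : v₀.1 = v)
    {q : {x : V // x ≠ v} → Bool}
    (h2 : ∀ (x : V) (hx : x ≠ v), p x = q ⟨x, hx⟩) :
    {a : {x : V // p x = true} // a ≠ v₀} ≃ {y : {x : V // x ≠ v} // q y = true} where
  toFun a := ⟨⟨a.1.1, fun h => a.2 (Subtype.ext (h.trans hv.symm))⟩,
    by rw [← h2 a.1.1 _]; exact a.1.2⟩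
  invFun b := ⟨⟨b.1.1, by rw [h2 b.1.1 b.1.2]; exact b.2⟩,
    fun h => b.1.2 ((congrArg Subtype.val h).trans hv)⟩
  left_inv a := by apply Subtype.ext; apply Subtype.ext; rfl
  right_inv b := by apply Subtype.ext; apply Subtype.ext; rfl

lemma MB_nullity_subMat_congr {W : Type} [DecidableEq W] [Fintype V] [Fintype W]
    (H1 : MGraph V) (H2 : MGraph W) (T1 : Finset V) (T2 : Finset W)
    (e : {x : V // H1.keep T1 x = true} ≃ {y : W // H2.keep T2 y = true})
    (h : ∀ a b : {x : V // H1.keep T1 x = true},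
      H1.matT T1 a.1 b.1 = H2.matT T2 (e a).1 (e b).1) :
    nullity (H1.subMat T1) = nullity (H2.subMat T2) :=
  MB_nullity_congr e _ _ (fun a b => h a b)

end MBAux

section MBMlc

variable {V : Type} [DecidableEq V] (G : MGraph V) (v : V)

lemma MB_mem_Tm (T' : Finset {x : V // x ≠ v}) (x : {x : V // x ≠ v}) :
    x.1 ∈ T'.map (Function.Embedding.subtype _) ↔ x ∈ T' := by
  constructor
  · intro h
    rcases Finset.mem_map.mp h with ⟨y, hy, hyx⟩
    have : y = x := Subtype.ext hyx
    rwa [this] at hy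
  · intro h
    exact Finset.mem_map_of_mem _ h

lemma MB_not_mem_Tm (T' : Finset {x : V // x ≠ v}) :
    v ∉ T'.map (Function.Embedding.subtype _) := by
  intro h
  rcases Finset.mem_map.mp h with ⟨y, _, hyx⟩
  exact y.2 hyx

lemma MB_mem_Ti (T' : Finset {x : V // x ≠ v}) (x : {x : V // x ≠ v}) :
    x.1 ∈ insert v (T'.map (Function.Embedding.subtype _)) ↔ x ∈ T' := by
  rw [Finset.mem_insert]
  simp only [x.2, false_or]
  exact MB_mem_Tm v T' x

lemma MB_mark_mlc_delete (x : {x : V // x ≠ v}) :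
    ((G.mlc v).delete v).mark x
      = if G.adj v x.1 = true then MGraph.flipN (G.mark x.1) else G.mark x.1 := by
  show (G.mlc v).mark x.1 = _
  simp [MGraph.mlc, x.2]

lemma MB_matT_mlc (hl : G.loop v = false) (T' : Finset {x : V // x ≠ v})
    (a b : {x : V // x ≠ v}) :
    ((G.mlc v).delete v).matT T' a b
      = G.matT (insert v (T'.map (Function.Embedding.subtype _))) a.1 b.1
        + G.matT (insert v (T'.map (Function.Embedding.subtype _))) a.1 v
          * G.matT (insert v (T'.map (Function.Embedding.subtype _))) v b.1 := by
  set Ti := insert v (T'.map (Function.Embedding.subtype _)) with hTi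
  have hav : G.matT Ti a.1 v = if G.adj v a.1 = true then 1 else 0 := by
    rw [MB_matT_ne _ _ a.2, G.adj_symm]
  have hvb : G.matT Ti v b.1 = if G.adj v b.1 = true then 1 else 0 := by
    rw [MB_matT_ne _ _ (Ne.symm b.2)]
  by_cases hab : a = b
  · subst hab
    rw [MB_matT_diag, MB_matT_diag, hav, hvb, MB_ind_mul, Bool.and_self]
    have hloop : ((G.mlc v).delete v).loop a = G.loop a.1 := rfl
    have hmm : (a.1 ∈ Ti) ↔ a ∈ T' := by rw [hTi]; exact MB_mem_Ti v T' a
    rw [hloop, MB_mark_mlc_delete]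
    by_cases hadj : G.adj v a.1 = true
    · rw [if_pos hadj, if_pos hadj, MB_hasR_flipN]
      by_cases hP : a ∈ T' <;> cases hR : (G.mark a.1).hasR <;>
        cases hL : G.loop a.1 <;> simp [hP, hR, hL, hmm] <;> decide
    · rw [if_neg hadj, if_neg hadj, add_zero]
      simp [hmm]
  · have hab1 : a.1 ≠ b.1 := fun h => hab (Subtype.ext h)
    rw [MB_matT_ne _ _ hab, MB_matT_ne _ _ hab1, hav, hvb, MB_ind_mul]
    have hadj' : ((G.mlc v).delete v).adj a b = (G.mlc v).adj a.1 b.1 := rfl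
    rw [hadj']
    show (if (if a.1 ≠ b.1 ∧ G.adj v a.1 = true ∧ G.adj v b.1 = true
        then !(G.adj a.1 b.1) else G.adj a.1 b.1) = true then (1 : ZMod 2) else 0) = _
    by_cases h1 : G.adj v a.1 = true <;> by_cases h2 : G.adj v b.1 = true <;>
      simp [h1, h2, hab1] <;> cases h3 : G.adj a.1 b.1 <;> simp [h3] <;> decide

lemma MB_keep_mlc (hl : G.loop v = false) (T' : Finset {x : V // x ≠ v})
    (x : {x : V // x ≠ v}) :
    G.keep (insert v (T'.map (Function.Embedding.subtype _))) x.1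
      = ((G.mlc v).delete v).keep T' x := by
  set Ti := insert v (T'.map (Function.Embedding.subtype _)) with hTi
  have hd : ((G.mlc v).delete v).matT T' x x
      = G.matT Ti x.1 x.1 + (if G.adj v x.1 = true then 1 else 0) := by
    rw [MB_matT_mlc G v hl T' x x, MB_matT_ne _ _ x.2, MB_matT_ne _ _ (Ne.symm x.2),
      G.adj_symm, MB_ind_mul, Bool.and_self]
  simp only [MGraph.keep, hd, MB_mark_mlc_delete]
  by_cases hadj : G.adj v x.1 = true
  · rw [if_pos hadj, if_pos hadj]
    have := MB_keep_flip (G.mark x.1) (G.matT Ti x.1 x.1)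
    -- isC (flipN m) = isU m, isU (flipN m) = isC m handled inside MB_keep_flip
    exact this
  · rw [if_neg hadj, if_neg hadj, add_zero]

lemma MB_N1 [Fintype V] (hl : G.loop v = false) (hm : G.mark v = Mark.un)
    (T' : Finset {x : V // x ≠ v}) :
    nullity (G.subMat (insert v (T'.map (Function.Embedding.subtype _))))
      = nullity (((G.mlc v).delete v).subMat T') := by
  set Ti := insert v (T'.map (Function.Embedding.subtype _)) with hTi
  have hkv : G.keep Ti v = true := by
    simp [MGraph.keep, hm, Mark.isC, Mark.isU]
  have hdiag : G.subMat Ti ⟨v, hkv⟩ ⟨v, hkv⟩ = 1 := by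
    show G.matT Ti v v = 1
    rw [MB_diag_G_v v G hl hm, if_pos (Finset.mem_insert_self v _)]
  rw [MB_pivot_nullity (G.subMat Ti) ⟨v, hkv⟩ hdiag]
  refine MB_nullity_congr
    (MB_pivEquiv v (⟨v, hkv⟩ : {x : V // G.keep Ti x = true}) rfl
      (fun x hx => (MB_keep_mlc G v hl T' ⟨x, hx⟩))) _ _ ?_
  intro x y
  show G.matT Ti x.1.1 y.1.1 + G.matT Ti x.1.1 v * G.matT Ti v y.1.1
    = ((G.mlc v).delete v).matT T' _ _
  rw [MB_matT_mlc G v hl T']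
  rfl

end MBMlc

section MBScen

variable {V : Type} [DecidableEq V] (G : MGraph V) (v : V)

lemma MB_matT_setMark_ne_v (m : Mark) (T : Finset V) {x y : V} (hx : x ≠ v) :
    (G.setMark v m).matT T x y = G.matT T x y := by
  by_cases hxy : x = y
  · subst hxy
    rw [MB_matT_diag, MB_matT_diag]
    simp [MGraph.setMark, hx]
    exact if_congr Iff.rfl rfl rfl
  · rw [MB_matT_ne _ _ hxy, MB_matT_ne _ _ hxy]
    rfl

lemma MB_keep_ext (H1 H2 : MGraph V) (T1 T2 : Finset V) (x : V)
    (hmark : H1.mark x = H2.mark x) (hd : H1.matT T1 x x = H2.matT T2 x x) :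
    H1.keep T1 x = H2.keep T2 x := by
  simp only [MGraph.keep, hmark, hd]

lemma MB_keep_G_v (hm : G.mark v = Mark.un) (T : Finset V) : G.keep T v = true := by
  simp [MGraph.keep, hm, show Mark.un.isC = false from rfl, show Mark.un.isU = false from rfl]

lemma MB_mark_setMark_v (m : Mark) : (G.setMark v m).mark v = m := by
  simp [MGraph.setMark]

lemma MB_mark_setMark_ne (m : Mark) {x : V} (hx : x ≠ v) :
    (G.setMark v m).mark x = G.mark x := by
  simp [MGraph.setMark, hx]

variable [Fintype V]

lemma MB_N2a (hl : G.loop v = false) (hm : G.mark v = Mark.un) (T : Finset V)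
    (hvT : v ∉ T) :
    nullity ((G.setMark v Mark.u).subMat T) = nullity (G.subMat T) := by
  have hM := MB_matT_setMark_noR v G hm Mark.u rfl T
  have hk : ∀ x, (G.setMark v Mark.u).keep T x = G.keep T x := by
    intro x
    by_cases hx : x = v
    · rw [hx, MB_keep_G_v G v hm T]
      have hd : (G.setMark v Mark.u).matT T v v = 0 := by
        rw [MB_diag_setMark_v v G hl]
        simp [hvT, show Mark.u.hasR = false from rfl]
      simp only [MGraph.keep, hd, MB_mark_setMark_v]
      decide
    · exact MB_keep_ext _ _ _ _ x (MB_mark_setMark_ne G v Mark.u hx) (by rw [hM])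
  exact MB_nullity_subMat_congr _ _ _ _
    (Equiv.subtypeEquivRight fun x => by rw [hk x]) (fun a b => by rw [hM]; rfl)

lemma MB_N3b (hl : G.loop v = false) (hm : G.mark v = Mark.un) (T : Finset V)
    (hvT : v ∈ T) :
    nullity ((G.setMark v Mark.c).subMat T) = nullity (G.subMat T) := by
  have hM := MB_matT_setMark_noR v G hm Mark.c rfl T
  have hk : ∀ x, (G.setMark v Mark.c).keep T x = G.keep T x := by
    intro x
    by_cases hx : x = v
    · rw [hx, MB_keep_G_v G v hm T]
      have hd : (G.setMark v Mark.c).matT T v v = 1 := by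
        rw [MB_diag_setMark_v v G hl]
        simp [hvT, show Mark.c.hasR = false from rfl]
      simp only [MGraph.keep, hd, MB_mark_setMark_v]
      decide
    · exact MB_keep_ext _ _ _ _ x (MB_mark_setMark_ne G v Mark.c hx) (by rw [hM])
  exact MB_nullity_subMat_congr _ _ _ _
    (Equiv.subtypeEquivRight fun x => by rw [hk x]) (fun a b => by rw [hM]; rfl)

lemma MB_N4a (hl : G.loop v = false) (hm : G.mark v = Mark.un) (T : Finset V)
    (hvT : v ∉ T) :
    nullity ((G.setMark v Mark.cr).subMat T) = nullity (G.subMat (insert v T)) := by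
  have hM := MB_matT_setMark_cr v G hm T hvT
  have hk : ∀ x, (G.setMark v Mark.cr).keep T x = G.keep (insert v T) x := by
    intro x
    by_cases hx : x = v
    · rw [hx, MB_keep_G_v G v hm (insert v T)]
      have hd : (G.setMark v Mark.cr).matT T v v = 1 := by
        rw [MB_diag_setMark_v v G hl]
        simp [hvT, show Mark.cr.hasR = true from rfl]
      simp only [MGraph.keep, hd, MB_mark_setMark_v]
      decide
    · exact MB_keep_ext _ _ _ _ x (MB_mark_setMark_ne G v Mark.cr hx) (by rw [hM])
  exact MB_nullity_subMat_congr _ _ _ _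
    (Equiv.subtypeEquivRight fun x => by rw [hk x]) (fun a b => by rw [hM]; rfl)

lemma MB_N2b (hl : G.loop v = false) (hm : G.mark v = Mark.un)
    (T' : Finset {x : V // x ≠ v}) :
    nullity ((G.setMark v Mark.u).subMat
        (insert v (T'.map (Function.Embedding.subtype _))))
      = nullity ((G.delete v).subMat T') := by
  set Ti := insert v (T'.map (Function.Embedding.subtype fun x => x ≠ v)) with hTidef
  have hmem : ∀ x : {x : V // x ≠ v}, x.1 ∈ Ti ↔ x ∈ T' := MB_mem_Ti v T'
  have hM := MB_matT_setMark_noR v G hm Mark.u rfl Ti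
  have hkv : (G.setMark v Mark.u).keep Ti v = false := by
    have hd : (G.setMark v Mark.u).matT Ti v v = 1 := by
      rw [MB_diag_setMark_v v G hl]
      simp [hTidef, Finset.mem_insert_self, show Mark.u.hasR = false from rfl]
    simp only [MGraph.keep, hd, MB_mark_setMark_v]
    decide
  have hk : ∀ (x : V) (hx : x ≠ v),
      (G.setMark v Mark.u).keep Ti x = (G.delete v).keep T' ⟨x, hx⟩ := by
    intro x hx
    rw [MB_keep_delete v G Ti T' hmem ⟨x, hx⟩]
    exact MB_keep_ext _ _ _ _ x (MB_mark_setMark_ne G v Mark.u hx) (by rw [hM])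
  refine MB_nullity_subMat_congr _ _ _ _ (MB_delEquiv v hkv hk) (fun a b => ?_)
  have ha : a.1 ≠ v := fun h => by
    have := a.2; rw [h, hkv] at this; exact Bool.noConfusion this
  have hb : b.1 ≠ v := fun h => by
    have := b.2; rw [h, hkv] at this; exact Bool.noConfusion this
  show (G.setMark v Mark.u).matT Ti a.1 b.1
    = (G.delete v).matT T' ⟨a.1, ha⟩ ⟨b.1, hb⟩
  rw [hM]
  exact (MB_matT_delete v G Ti T' hmem ⟨a.1, ha⟩ ⟨b.1, hb⟩).symm

lemma MB_N3a (hl : G.loop v = false) (hm : G.mark v = Mark.un)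
    (T' : Finset {x : V // x ≠ v}) :
    nullity ((G.setMark v Mark.c).subMat (T'.map (Function.Embedding.subtype _)))
      = nullity ((G.delete v).subMat T') := by
  set Tm := T'.map (Function.Embedding.subtype fun x => x ≠ v) with hTmdef
  have hmem : ∀ x : {x : V // x ≠ v}, x.1 ∈ Tm ↔ x ∈ T' := MB_mem_Tm v T'
  have hM := MB_matT_setMark_noR v G hm Mark.c rfl Tm
  have hkv : (G.setMark v Mark.c).keep Tm v = false := by
    have hd : (G.setMark v Mark.c).matT Tm v v = 0 := by
      rw [MB_diag_setMark_v v G hl]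
      simp [hTmdef, MB_not_mem_Tm v T', show Mark.c.hasR = false from rfl]
    simp only [MGraph.keep, hd, MB_mark_setMark_v]
    decide
  have hk : ∀ (x : V) (hx : x ≠ v),
      (G.setMark v Mark.c).keep Tm x = (G.delete v).keep T' ⟨x, hx⟩ := by
    intro x hx
    rw [MB_keep_delete v G Tm T' hmem ⟨x, hx⟩]
    exact MB_keep_ext _ _ _ _ x (MB_mark_setMark_ne G v Mark.c hx) (by rw [hM])
  refine MB_nullity_subMat_congr _ _ _ _ (MB_delEquiv v hkv hk) (fun a b => ?_)
  have ha : a.1 ≠ v := fun h => by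
    have := a.2; rw [h, hkv] at this; exact Bool.noConfusion this
  have hb : b.1 ≠ v := fun h => by
    have := b.2; rw [h, hkv] at this; exact Bool.noConfusion this
  show (G.setMark v Mark.c).matT Tm a.1 b.1
    = (G.delete v).matT T' ⟨a.1, ha⟩ ⟨b.1, hb⟩
  rw [hM]
  exact (MB_matT_delete v G Tm T' hmem ⟨a.1, ha⟩ ⟨b.1, hb⟩).symm

lemma MB_N4b (hl : G.loop v = false) (hm : G.mark v = Mark.un)
    (T' : Finset {x : V // x ≠ v}) :
    nullity ((G.setMark v Mark.cr).subMat
        (insert v (T'.map (Function.Embedding.subtype _))))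
      = nullity ((G.delete v).subMat T') := by
  set Ti := insert v (T'.map (Function.Embedding.subtype fun x => x ≠ v)) with hTidef
  have hmem : ∀ x : {x : V // x ≠ v}, x.1 ∈ Ti ↔ x ∈ T' := MB_mem_Ti v T'
  have hkv : (G.setMark v Mark.cr).keep Ti v = false := by
    have hd : (G.setMark v Mark.cr).matT Ti v v = 0 := by
      rw [MB_diag_setMark_v v G hl]
      simp [hTidef, Finset.mem_insert_self, show Mark.cr.hasR = true from rfl]
    simp only [MGraph.keep, hd, MB_mark_setMark_v]
    decide
  have hk : ∀ (x : V) (hx : x ≠ v),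
      (G.setMark v Mark.cr).keep Ti x = (G.delete v).keep T' ⟨x, hx⟩ := by
    intro x hx
    rw [MB_keep_delete v G Ti T' hmem ⟨x, hx⟩]
    exact MB_keep_ext _ _ _ _ x (MB_mark_setMark_ne G v Mark.cr hx)
      (MB_matT_setMark_ne_v G v Mark.cr Ti hx)
  refine MB_nullity_subMat_congr _ _ _ _ (MB_delEquiv v hkv hk) (fun a b => ?_)
  have ha : a.1 ≠ v := fun h => by
    have := a.2; rw [h, hkv] at this; exact Bool.noConfusion this
  have hb : b.1 ≠ v := fun h => by
    have := b.2; rw [h, hkv] at this; exact Bool.noConfusion this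
  show (G.setMark v Mark.cr).matT Ti a.1 b.1
    = (G.delete v).matT T' ⟨a.1, ha⟩ ⟨b.1, hb⟩
  rw [MB_matT_setMark_ne_v G v Mark.cr Ti ha]
  exact (MB_matT_delete v G Ti T' hmem ⟨a.1, ha⟩ ⟨b.1, hb⟩).symm

lemma MB_card_ne : Fintype.card {x : V // x ≠ v} = Fintype.card V - 1 := by
  rw [show Fintype.card {x : V // x ≠ v} = Fintype.card {x : V // ¬ x = v} from rfl,
    Fintype.card_subtype_compl, Fintype.card_subtype_eq]

lemma MB_sum_out {R : Type*} [CommRing R] (g : Finset V → R) :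
    ∑ T ∈ Finset.univ.filter (fun T : Finset V => v ∉ T), g T
      = ∑ T' : Finset {x : V // x ≠ v}, g (T'.map (Function.Embedding.subtype _)) := by
  refine Finset.sum_bij' (fun T _ => T.subtype (fun x => x ≠ v))
    (fun T' _ => T'.map (Function.Embedding.subtype _)) ?_ ?_ ?_ ?_ ?_
  · intro a _; exact Finset.mem_univ _
  · intro a _
    simp only [Finset.mem_filter, Finset.mem_univ, true_and]
    exact MB_not_mem_Tm v a
  · intro a ha
    simp only [Finset.mem_filter, Finset.mem_univ, true_and] at ha
    show (Finset.map (Function.Embedding.subtype _) (a.subtype fun x => x ≠ v)) = a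
    rw [Finset.subtype_map, Finset.filter_ne', Finset.erase_eq_of_notMem ha]
  · intro a _
    ext x
    rw [Finset.mem_subtype]
    exact MB_mem_Tm v a x
  · intro a ha
    simp only [Finset.mem_filter, Finset.mem_univ, true_and] at ha
    show g a = g (Finset.map (Function.Embedding.subtype _) (a.subtype fun x => x ≠ v))
    rw [Finset.subtype_map, Finset.filter_ne', Finset.erase_eq_of_notMem ha]

lemma MB_sum_in {R : Type*} [CommRing R] (g : Finset V → R) :
    ∑ T ∈ Finset.univ.filter (fun T : Finset V => ¬ v ∉ T), g T
      = ∑ T' : Finset {x : V // x ≠ v},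
          g (insert v (T'.map (Function.Embedding.subtype _))) := by
  refine Finset.sum_bij' (fun T _ => T.subtype (fun x => x ≠ v))
    (fun T' _ => insert v (T'.map (Function.Embedding.subtype _))) ?_ ?_ ?_ ?_ ?_
  · intro a _; exact Finset.mem_univ _
  · intro a _
    simp only [Finset.mem_filter, Finset.mem_univ, true_and, not_not]
    exact Finset.mem_insert_self v _
  · intro a ha
    simp only [Finset.mem_filter, Finset.mem_univ, true_and, not_not] at ha
    show insert v (Finset.map (Function.Embedding.subtype _) (a.subtype fun x => x ≠ v)) = a
    rw [Finset.subtype_map, Finset.filter_ne', Finset.insert_erase ha]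
  · intro a _
    ext x
    rw [Finset.mem_subtype]
    exact MB_mem_Ti v a x
  · intro a ha
    simp only [Finset.mem_filter, Finset.mem_univ, true_and, not_not] at ha
    show g a = g (insert v (Finset.map (Function.Embedding.subtype _) (a.subtype fun x => x ≠ v)))
    rw [Finset.subtype_map, Finset.filter_ne', Finset.insert_erase ha]

end MBScen

/-- let `v` be an unlooped, unmarked vertex of `G` and let
`S = d^φ · Σ_{T ⊆ V(G), v ∉ T} A^{n−|T|} B^{|T|} d^{ν(𝒜(G)_T)}`.  Then:
`[G] = S + B[G_cru^v − v]`;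
`[G with v marked u] = S + B[G − v]`;
`[G with v marked c] = A[G − v] + B[G_cru^v − v]`; and
`[G with v marked cr] = B[G − v] + A[G_cru^v − v]`. -/
theorem bracket_variants_at_vertex {V : Type} [DecidableEq V] [Fintype V]
    (G : MGraph V) (v : V) (hl : G.loop v = false) (hm : G.mark v = Mark.un)
    {R : Type*} [CommRing R] (A B d : R) :
    let S : R := d ^ G.freeLoops *
      ∑ T ∈ Finset.univ.filter (fun T : Finset V => v ∉ T),
        A ^ (Fintype.card V - T.card) * B ^ T.card * d ^ nullity (G.subMat T)
    G.bracket A B d = S + B * ((G.mlc v).delete v).bracket A B d ∧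
    (G.setMark v Mark.u).bracket A B d = S + B * (G.delete v).bracket A B d ∧
    (G.setMark v Mark.c).bracket A B d =
      A * (G.delete v).bracket A B d + B * ((G.mlc v).delete v).bracket A B d ∧
    (G.setMark v Mark.cr).bracket A B d =
      B * (G.delete v).bracket A B d + A * ((G.mlc v).delete v).bracket A B d := by
  intro S
  have hcV : 0 < Fintype.card V := Fintype.card_pos_iff.mpr ⟨v⟩
  have hkle : ∀ T' : Finset {x : V // x ≠ v}, T'.card ≤ Fintype.card V - 1 :=
    fun T' => (Finset.card_le_univ T').trans_eq (MB_card_ne v)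
  have hcardTi : ∀ T' : Finset {x : V // x ≠ v},
      (insert v (T'.map (Function.Embedding.subtype fun x => x ≠ v))).card
        = T'.card + 1 := fun T' => by
    rw [Finset.card_insert_of_notMem (MB_not_mem_Tm v T'), Finset.card_map]
  have hexp1 : ∀ T' : Finset {x : V // x ≠ v},
      Fintype.card V - (T'.card + 1) = Fintype.card V - 1 - T'.card := fun T' => by
    omega
  have hexp2 : ∀ T' : Finset {x : V // x ≠ v},
      Fintype.card V - T'.card = (Fintype.card V - 1 - T'.card) + 1 := fun T' => by
    have := hkle T'
    omega
  -- brackets of the two deletions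
  have hbrMlc : ((G.mlc v).delete v).bracket A B d
      = d ^ G.freeLoops * ∑ T' : Finset {x : V // x ≠ v},
          A ^ (Fintype.card V - 1 - T'.card) * B ^ T'.card
            * d ^ nullity (((G.mlc v).delete v).subMat T') := by
    simp only [MGraph.bracket, MB_card_ne v]
    rfl
  have hbrDel : (G.delete v).bracket A B d
      = d ^ G.freeLoops * ∑ T' : Finset {x : V // x ≠ v},
          A ^ (Fintype.card V - 1 - T'.card) * B ^ T'.card
            * d ^ nullity ((G.delete v).subMat T') := by
    simp only [MGraph.bracket, MB_card_ne v]
    rfl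
  -- generic splitting of a bracket
  have hsplit : ∀ H : MGraph V, H.bracket A B d = d ^ H.freeLoops *
      ((∑ T ∈ Finset.univ.filter (fun T : Finset V => v ∉ T),
          A ^ (Fintype.card V - T.card) * B ^ T.card * d ^ nullity (H.subMat T))
      + (∑ T ∈ Finset.univ.filter (fun T : Finset V => ¬ v ∉ T),
          A ^ (Fintype.card V - T.card) * B ^ T.card * d ^ nullity (H.subMat T))) := by
    intro H
    simp only [MGraph.bracket]
    rw [Finset.sum_filter_add_sum_filter_not]
  -- the in-part for the graph G itself
  have hinG : (∑ T ∈ Finset.univ.filter (fun T : Finset V => ¬ v ∉ T),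
        A ^ (Fintype.card V - T.card) * B ^ T.card * d ^ nullity (G.subMat T))
      = B * ∑ T' : Finset {x : V // x ≠ v},
          A ^ (Fintype.card V - 1 - T'.card) * B ^ T'.card
            * d ^ nullity (((G.mlc v).delete v).subMat T') := by
    rw [MB_sum_in v (fun T : Finset V =>
      A ^ (Fintype.card V - T.card) * B ^ T.card * d ^ nullity (G.subMat T)),
      Finset.mul_sum]
    refine Finset.sum_congr rfl fun T' _ => ?_
    rw [MB_N1 G v hl hm T', hcardTi T', hexp1 T', pow_succ]
    ring
  -- CLAIM 1
  have key1 : G.bracket A B d = S + B * ((G.mlc v).delete v).bracket A B d := by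
    rw [hsplit G, hinG, hbrMlc]
    show d ^ G.freeLoops * (_ + B * _)
      = d ^ G.freeLoops * _ + B * (d ^ G.freeLoops * _)
    ring
  -- CLAIM 2
  have key2 : (G.setMark v Mark.u).bracket A B d = S + B * (G.delete v).bracket A B d := by
    rw [hsplit (G.setMark v Mark.u)]
    have hout : (∑ T ∈ Finset.univ.filter (fun T : Finset V => v ∉ T),
          A ^ (Fintype.card V - T.card) * B ^ T.card
            * d ^ nullity ((G.setMark v Mark.u).subMat T))
        = ∑ T ∈ Finset.univ.filter (fun T : Finset V => v ∉ T),
          A ^ (Fintype.card V - T.card) * B ^ T.card * d ^ nullity (G.subMat T) :=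
      Finset.sum_congr rfl fun T hT => by
        rw [MB_N2a G v hl hm T (Finset.mem_filter.mp hT).2]
    have hin : (∑ T ∈ Finset.univ.filter (fun T : Finset V => ¬ v ∉ T),
          A ^ (Fintype.card V - T.card) * B ^ T.card
            * d ^ nullity ((G.setMark v Mark.u).subMat T))
        = B * ∑ T' : Finset {x : V // x ≠ v},
            A ^ (Fintype.card V - 1 - T'.card) * B ^ T'.card
              * d ^ nullity ((G.delete v).subMat T') := by
      rw [MB_sum_in v (fun T : Finset V =>
        A ^ (Fintype.card V - T.card) * B ^ T.card
          * d ^ nullity ((G.setMark v Mark.u).subMat T)), Finset.mul_sum]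
      refine Finset.sum_congr rfl fun T' _ => ?_
      rw [MB_N2b G v hl hm T', hcardTi T', hexp1 T', pow_succ]
      ring
    rw [hout, hin, hbrDel]
    show d ^ G.freeLoops * (_ + B * _)
      = d ^ G.freeLoops * _ + B * (d ^ G.freeLoops * _)
    ring
  -- CLAIM 3
  have key3 : (G.setMark v Mark.c).bracket A B d =
      A * (G.delete v).bracket A B d + B * ((G.mlc v).delete v).bracket A B d := by
    rw [hsplit (G.setMark v Mark.c)]
    have hout : (∑ T ∈ Finset.univ.filter (fun T : Finset V => v ∉ T),
          A ^ (Fintype.card V - T.card) * B ^ T.card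
            * d ^ nullity ((G.setMark v Mark.c).subMat T))
        = A * ∑ T' : Finset {x : V // x ≠ v},
            A ^ (Fintype.card V - 1 - T'.card) * B ^ T'.card
              * d ^ nullity ((G.delete v).subMat T') := by
      rw [MB_sum_out v (fun T : Finset V =>
        A ^ (Fintype.card V - T.card) * B ^ T.card
          * d ^ nullity ((G.setMark v Mark.c).subMat T)), Finset.mul_sum]
      refine Finset.sum_congr rfl fun T' _ => ?_
      rw [MB_N3a G v hl hm T', Finset.card_map, hexp2 T', pow_succ]
      ring
    have hin : (∑ T ∈ Finset.univ.filter (fun T : Finset V => ¬ v ∉ T),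
          A ^ (Fintype.card V - T.card) * B ^ T.card
            * d ^ nullity ((G.setMark v Mark.c).subMat T))
        = B * ∑ T' : Finset {x : V // x ≠ v},
            A ^ (Fintype.card V - 1 - T'.card) * B ^ T'.card
              * d ^ nullity (((G.mlc v).delete v).subMat T') := by
      rw [show (∑ T ∈ Finset.univ.filter (fun T : Finset V => ¬ v ∉ T),
          A ^ (Fintype.card V - T.card) * B ^ T.card
            * d ^ nullity ((G.setMark v Mark.c).subMat T))
          = ∑ T ∈ Finset.univ.filter (fun T : Finset V => ¬ v ∉ T),
          A ^ (Fintype.card V - T.card) * B ^ T.card * d ^ nullity (G.subMat T)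
        from Finset.sum_congr rfl fun T hT => by
          rw [MB_N3b G v hl hm T (not_not.mp (Finset.mem_filter.mp hT).2)]]
      exact hinG
    rw [hout, hin, hbrDel, hbrMlc]
    show d ^ G.freeLoops * (A * _ + B * _)
      = A * (d ^ G.freeLoops * _) + B * (d ^ G.freeLoops * _)
    ring
  -- CLAIM 4
  have key4 : (G.setMark v Mark.cr).bracket A B d =
      B * (G.delete v).bracket A B d + A * ((G.mlc v).delete v).bracket A B d := by
    rw [hsplit (G.setMark v Mark.cr)]
    have hout : (∑ T ∈ Finset.univ.filter (fun T : Finset V => v ∉ T),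
          A ^ (Fintype.card V - T.card) * B ^ T.card
            * d ^ nullity ((G.setMark v Mark.cr).subMat T))
        = A * ∑ T' : Finset {x : V // x ≠ v},
            A ^ (Fintype.card V - 1 - T'.card) * B ^ T'.card
              * d ^ nullity (((G.mlc v).delete v).subMat T') := by
      rw [MB_sum_out v (fun T : Finset V =>
        A ^ (Fintype.card V - T.card) * B ^ T.card
          * d ^ nullity ((G.setMark v Mark.cr).subMat T)), Finset.mul_sum]
      refine Finset.sum_congr rfl fun T' _ => ?_
      rw [MB_N4a G v hl hm (T'.map (Function.Embedding.subtype fun x => x ≠ v))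
        (MB_not_mem_Tm v T'), MB_N1 G v hl hm T', Finset.card_map, hexp2 T', pow_succ]
      ring
    have hin : (∑ T ∈ Finset.univ.filter (fun T : Finset V => ¬ v ∉ T),
          A ^ (Fintype.card V - T.card) * B ^ T.card
            * d ^ nullity ((G.setMark v Mark.cr).subMat T))
        = B * ∑ T' : Finset {x : V // x ≠ v},
            A ^ (Fintype.card V - 1 - T'.card) * B ^ T'.card
              * d ^ nullity ((G.delete v).subMat T') := by
      rw [MB_sum_in v (fun T : Finset V =>
        A ^ (Fintype.card V - T.card) * B ^ T.card
          * d ^ nullity ((G.setMark v Mark.cr).subMat T)), Finset.mul_sum]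
      refine Finset.sum_congr rfl fun T' _ => ?_
      rw [MB_N4b G v hl hm T', hcardTi T', hexp1 T', pow_succ]
      ring
    rw [hout, hin, hbrDel, hbrMlc]
    show d ^ G.freeLoops * (A * _ + B * _)
      = B * (d ^ G.freeLoops * _) + A * (d ^ G.freeLoops * _)
    ring
  exact ⟨key1, key2, key3, key4⟩
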